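/- If G = G(m,p,k) is a metacyclic group with trivial centre whose quotient parameter p (= ind_m(k)) is prime, then every nonzero element of the multiplicative closure R* of R = {k^j − 1 mod m : j ∈ ℤ_p} in ℤ_m is a unit of ℤ_m. -/
import Mathlib


/-- `n = ind_m(k)`: `n` is the least positive integer with `k^n ≡ 1 (mod m)`. -/
def IsIndex (m k n : ℕ) : Prop :=
  0 < n ∧ k ^ n ≡ 1 [MOD m] ∧ ∀ d : ℕ, 0 < d → k ^ d ≡ 1 [MOD m] → n ≤ d

/-- The multiplicative closure `S*` of `S` in `ℤ_m`. -/
def mulClosure (m : ℕ) (S : Set (ZMod m)) : Set (ZMod m) :=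
  Subsemigroup.closure S

/-- The set `R = {k^j − 1 mod m : j ∈ ℤ_p}`. -/
def Rset (m p k : ℕ) : Set (ZMod m) :=
  {x | ∃ j : ZMod p, x = (k : ZMod m) ^ j.val - 1}

lemma key (m p k : ℕ) (hm : 0 < m) (hk : 0 < k)
    (hcop : Nat.gcd m (k - 1) = 1) (hind : IsIndex m k p)
    (hp : p.Prime) (j : ℕ) (hj : 0 < j) (hjp : j < p) :
    IsUnit ((k : ZMod m) ^ j - 1) := by
  haveI : NeZero m := ⟨hm.ne'⟩
  have h1 : 1 ≤ k ^ j := Nat.one_le_pow _ _ hk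
  have hcast : (((k ^ j - 1 : ℕ)) : ZMod m) = (k : ZMod m) ^ j - 1 := by
    push_cast [h1]; ring
  rw [← hcast, ZMod.isUnit_iff_coprime]
  by_contra hnc
  obtain ⟨q, hq, hqd⟩ := Nat.exists_prime_and_dvd hnc
  have hqn : q ∣ k ^ j - 1 := hqd.trans (Nat.gcd_dvd_left _ _)
  have hqm : q ∣ m := hqd.trans (Nat.gcd_dvd_right _ _)
  haveI : NeZero q := ⟨hq.ne_zero⟩
  have hkj : (k : ZMod q) ^ j = 1 := by
    have : ((k ^ j - 1 : ℕ) : ZMod q) = 0 := (ZMod.natCast_eq_zero_iff _ _).mpr hqn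
    push_cast [h1] at this
    linear_combination this
  have hkp : (k : ZMod q) ^ p = 1 := by
    have h2 : k ^ p ≡ 1 [MOD q] := (hind.2.1).of_dvd hqm
    have := (ZMod.natCast_eq_natCast_iff _ _ _).mpr h2
    push_cast at this
    exact this
  have hd1 : orderOf (k : ZMod q) ∣ j := orderOf_dvd_of_pow_eq_one hkj
  have hd2 : orderOf (k : ZMod q) ∣ p := orderOf_dvd_of_pow_eq_one hkp
  have hcopjp : Nat.Coprime p j :=
    (Nat.Prime.coprime_iff_not_dvd hp).mpr (fun h => absurd (Nat.le_of_dvd hj h) (not_le.2 hjp))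
  have : orderOf (k : ZMod q) ∣ 1 := by
    have := Nat.dvd_gcd hd2 hd1
    rwa [Nat.Coprime.gcd_eq_one hcopjp] at this
  have hk1 : (k : ZMod q) = 1 := orderOf_eq_one_iff.mp (Nat.dvd_one.mp this)
  have hqk1 : q ∣ k - 1 := by
    rw [← ZMod.natCast_eq_zero_iff]
    push_cast [hk]
    rw [hk1]; ring
  have : q ∣ 1 := hcop ▸ Nat.dvd_gcd hqm hqk1
  exact hq.one_lt.ne' (Nat.dvd_one.mp this)

/-- if `G = G(m,p,k)` has trivial centre and the quotient
parameter `p = ind_m(k)` is prime, then every nonzero element of the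
multiplicative closure `R*` of `R = {k^j − 1 : j ∈ ℤ_p}` in `ℤ_m` is a unit
of `ℤ_m`. -/
theorem stmt_19 (m p k : ℕ) (hm : 0 < m) (hk : 0 < k)
    (hcop : Nat.gcd m (k - 1) = 1) (hind : IsIndex m k p)
    (hp : p.Prime) :
    ∀ x ∈ mulClosure m (Rset m p k), x ≠ 0 → IsUnit x := by
  haveI : NeZero p := ⟨hp.ne_zero⟩
  have main : ∀ x ∈ mulClosure m (Rset m p k), x = 0 ∨ IsUnit x := by
    intro x hx
    induction hx using Subsemigroup.closure_induction with
    | mem y hy =>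
      obtain ⟨j, rfl⟩ := hy
      rcases Nat.eq_zero_or_pos j.val with h0 | hpos
      · left; simp [h0]
      · right; exact key m p k hm hk hcop hind hp j.val hpos (ZMod.val_lt j)
    | mul a b _ _ ha hb =>
      rcases ha with rfl | ha
      · left; simp
      rcases hb with rfl | hb
      · left; simp
      · right; exact ha.mul hb
  intro x hx hxne
  rcases main x hx with rfl | h
  · exact absurd rfl hxne
  · exact h
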